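/- Let K1 and K2 be quantum channels with fixed points ρ1 and ρ2 respectively, and let τ be a positive integer such that for every density matrix ρ, ‖K1^τ[ρ] − ρ1‖₁ ≤ ε. Then ‖ρ1 − ρ2‖₁ ≤ ε + τ·‖K1 − K2‖_{1→1}, where ‖M‖_{1→1} = sup over density matrices ρ of ‖M[ρ]‖₁. -/

import Mathlib

open MeasureTheory Matrix
open scoped ComplexOrder

/-- The square root of a positive semidefinite matrix (as defined in Mathlib, December 2024;
removed from Mathlib since). -/
noncomputable def Matrix.PosSemidef.sqrt {n : Type*} [Fintype n] [DecidableEq n] {A : Matrix n n ℂ}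
    (hA : A.PosSemidef) : Matrix n n ℂ :=
  hA.1.eigenvectorUnitary.1 * diagonal ((↑) ∘ (√·) ∘ hA.1.eigenvalues) *
  (star hA.1.eigenvectorUnitary : Matrix n n ℂ)

/-- The trace norm (Schatten 1-norm) of a complex square matrix. -/
noncomputable def traceNorm {n : Type*} [Fintype n] [DecidableEq n] (A : Matrix n n ℂ) : ℝ :=
  ((Matrix.PosSemidef.sqrt (Matrix.posSemidef_conjTranspose_mul_self A)).trace).re

/-- The operator norm (Schatten ∞-norm) of a complex square matrix. -/
noncomputable def opNorm {n : Type*} [Fintype n] [DecidableEq n] (A : Matrix n n ℂ) : ℝ :=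
  ‖Matrix.toEuclideanCLM (𝕜 := ℂ) (n := n) A‖

/-- A density matrix: positive semidefinite with unit trace. -/
def IsDensityMatrix {n : Type*} [Fintype n] [DecidableEq n] (ρ : Matrix n n ℂ) : Prop :=
  ρ.PosSemidef ∧ ρ.trace = 1

def IsTracePreserving {n : Type*} [Fintype n] [DecidableEq n]
    (Φ : Matrix n n ℂ →ₗ[ℂ] Matrix n n ℂ) : Prop :=
  ∀ A, (Φ A).trace = A.trace

/-- Complete positivity: all finite ampliations map positive semidefinite matrices to
positive semidefinite matrices. -/
def IsCompletelyPositive {n : Type*} [Fintype n] [DecidableEq n]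
    (Φ : Matrix n n ℂ →ₗ[ℂ] Matrix n n ℂ) : Prop :=
  ∀ (k : ℕ) (A : Matrix (n × Fin k) (n × Fin k) ℂ), A.PosSemidef →
    (Matrix.of fun (p q : n × Fin k) =>
      Φ (Matrix.of fun i j => A (i, p.2) (j, q.2)) p.1 q.1).PosSemidef

/-- A quantum channel: completely positive and trace preserving. -/
def IsQuantumChannel {n : Type*} [Fintype n] [DecidableEq n]
    (Φ : Matrix n n ℂ →ₗ[ℂ] Matrix n n ℂ) : Prop :=
  IsCompletelyPositive Φ ∧ IsTracePreserving Φ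

/-- The induced 1→1 norm of a superoperator: supremum of trace norms of images of
density matrices. -/
noncomputable def norm11 {n : Type*} [Fintype n] [DecidableEq n]
    (M : Matrix n n ℂ → Matrix n n ℂ) : ℝ :=
  ⨆ ρ : {ρ : Matrix n n ℂ // IsDensityMatrix ρ}, traceNorm (M ρ)

/-- The induced 1→1 norm of a superoperator: supremum of trace norms of images of the
trace-norm unit ball. -/
noncomputable def norm11Ball {n : Type*} [Fintype n] [DecidableEq n]
    (M : Matrix n n ℂ → Matrix n n ℂ) : ℝ :=
  ⨆ X : {X : Matrix n n ℂ // traceNorm X ≤ 1}, traceNorm (M X)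


namespace Matrix.PosSemidef
open scoped MatrixOrder
variable {n : Type*} [Fintype n] [DecidableEq n]

lemma sqrt_eq_cfc {A : Matrix n n ℂ} (hA : A.PosSemidef) : hA.sqrt = CFC.sqrt A := by
  rw [CFC.sqrt_eq_real_sqrt A hA.nonneg, cfcₙ_eq_cfc, hA.1.cfc_eq]
  rfl

lemma posSemidef_sqrt {A : Matrix n n ℂ} (hA : A.PosSemidef) : hA.sqrt.PosSemidef := by
  rw [sqrt_eq_cfc]; exact (CFC.sqrt_nonneg A).posSemidef

lemma sqrt_mul_self {A : Matrix n n ℂ} (hA : A.PosSemidef) : hA.sqrt * hA.sqrt = A := by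
  rw [sqrt_eq_cfc]; exact CFC.sqrt_mul_sqrt_self A hA.nonneg

lemma sq_sqrt {A : Matrix n n ℂ} (hA : A.PosSemidef) : hA.sqrt ^ 2 = A := by
  rw [pow_two, sqrt_mul_self]

lemma eq_sqrt_of_sq_eq {A : Matrix n n ℂ} (hA : A.PosSemidef) {B : Matrix n n ℂ}
    (hB : B.PosSemidef) (h : A ^ 2 = B) : A = hB.sqrt := by
  rw [sqrt_eq_cfc]
  exact (CFC.sqrt_unique (by rw [← h, pow_two]) hA.nonneg).symm

end Matrix.PosSemidef

section AuxLemmas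
namespace TraceNormAux
open Matrix
open scoped ComplexOrder
variable {n : Type*} [Fintype n] [DecidableEq n]

section conjD
variable {X : Matrix n n ℂ} (hX : X.IsHermitian)

noncomputable def conjD (f : n → ℝ) : Matrix n n ℂ :=
  (hX.eigenvectorUnitary : Matrix n n ℂ) * diagonal (fun i => (f i : ℂ)) *
    star (hX.eigenvectorUnitary : Matrix n n ℂ)

lemma conjD_mul (f g : n → ℝ) : conjD hX f * conjD hX g = conjD hX (fun i => f i * g i) := by
  have h : star (hX.eigenvectorUnitary : Matrix n n ℂ) * (hX.eigenvectorUnitary : Matrix n n ℂ) = 1 :=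
    Unitary.coe_star_mul_self hX.eigenvectorUnitary
  simp only [conjD, Matrix.mul_assoc]
  rw [← Matrix.mul_assoc (star _) _, h, Matrix.one_mul, ← Matrix.mul_assoc (diagonal _),
    diagonal_mul_diagonal]
  push_cast
  rfl

lemma conjD_posSemidef {f : n → ℝ} (hf : ∀ i, 0 ≤ f i) : (conjD hX f).PosSemidef := by
  have : (diagonal (fun i => (f i : ℂ))).PosSemidef :=
    posSemidef_diagonal_iff.mpr fun i => by exact_mod_cast hf i
  simpa [conjD, Matrix.mul_assoc, Matrix.star_eq_conjTranspose] using this.mul_mul_conjTranspose_same (hX.eigenvectorUnitary : Matrix n n ℂ)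

lemma conjD_trace (f : n → ℝ) : (conjD hX f).trace = ∑ i, (f i : ℂ) := by
  have h : star (hX.eigenvectorUnitary : Matrix n n ℂ) * (hX.eigenvectorUnitary : Matrix n n ℂ) = 1 :=
    Unitary.coe_star_mul_self hX.eigenvectorUnitary
  rw [conjD, Matrix.trace_mul_cycle, h, Matrix.one_mul, trace_diagonal]

lemma conjD_sub (f g : n → ℝ) : conjD hX f - conjD hX g = conjD hX (fun i => f i - g i) := by
  simp only [conjD, ← Matrix.sub_mul, ← Matrix.mul_sub, diagonal_sub]
  push_cast
  rfl

lemma conjD_eigen : conjD hX hX.eigenvalues = X := (hX.spectral_theorem).symm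

lemma conjD_one : conjD hX (fun _ => 1) = 1 := by
  have h : (hX.eigenvectorUnitary : Matrix n n ℂ) * star (hX.eigenvectorUnitary : Matrix n n ℂ) = 1 :=
    Unitary.coe_mul_star_self hX.eigenvectorUnitary
  simp [conjD, h]

end conjD

lemma psd_trace_nonneg {A : Matrix n n ℂ} (hA : A.PosSemidef) : 0 ≤ A.trace := by
  exact hA.trace_nonneg

lemma psd_trace_re_nonneg {A : Matrix n n ℂ} (hA : A.PosSemidef) : 0 ≤ (A.trace).re :=
  (Complex.le_def.mp (psd_trace_nonneg hA)).1

lemma traceNorm_of_posSemidef {A : Matrix n n ℂ} (hA : A.PosSemidef) :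
    traceNorm A = A.trace.re := by
  have h : A = (Matrix.posSemidef_conjTranspose_mul_self A).sqrt :=
    hA.eq_sqrt_of_sq_eq _ (by rw [pow_two, hA.1.eq])
  rw [traceNorm, ← h]

lemma trace_mul_psd_re_nonneg {P M : Matrix n n ℂ} (hP : P.PosSemidef) (hM : M.PosSemidef) :
    0 ≤ ((P * M).trace).re := by
  have h1 : P = hP.sqrt * hP.sqrt := hP.sqrt_mul_self.symm
  have h2 : (P * M).trace = (hP.sqrt ᴴ * M * hP.sqrt).trace := by
    rw [hP.posSemidef_sqrt.1.eq]
    conv_lhs => rw [h1]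
    rw [Matrix.mul_assoc, Matrix.trace_mul_comm, Matrix.mul_assoc]
  rw [h2]
  exact psd_trace_re_nonneg (hM.conjTranspose_mul_mul_same _)

lemma traceNorm_hermitian {X : Matrix n n ℂ} (hX : X.IsHermitian) :
    traceNorm X = ∑ i, |hX.eigenvalues i| := by
  have hS : (conjD hX (fun i => |hX.eigenvalues i|)).PosSemidef :=
    conjD_posSemidef hX (fun i => abs_nonneg _)
  have hsq : conjD hX (fun i => |hX.eigenvalues i|) ^ 2 = Xᴴ * X := by
    rw [pow_two, conjD_mul, hX.eq]
    conv_rhs => rw [← conjD_eigen hX, conjD_mul]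
    have : (fun i => |hX.eigenvalues i| * |hX.eigenvalues i|) =
        fun i => hX.eigenvalues i * hX.eigenvalues i := funext fun i => abs_mul_abs_self _
    rw [this]
  have h := hS.eq_sqrt_of_sq_eq (Matrix.posSemidef_conjTranspose_mul_self X) hsq
  rw [traceNorm, ← h, conjD_trace]
  simp

lemma exists_posneg_parts {X : Matrix n n ℂ} (hX : X.IsHermitian) :
    ∃ P N : Matrix n n ℂ, P.PosSemidef ∧ N.PosSemidef ∧
    X = P - N ∧ traceNorm X = P.trace.re + N.trace.re := by
  refine ⟨conjD hX (fun i => max (hX.eigenvalues i) 0),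
    conjD hX (fun i => max (-hX.eigenvalues i) 0),
    conjD_posSemidef hX (fun i => le_max_right _ _),
    conjD_posSemidef hX (fun i => le_max_right _ _), ?_, ?_⟩
  · rw [conjD_sub]
    conv_lhs => rw [← conjD_eigen hX]
    have : (fun i => max (hX.eigenvalues i) 0 - max (-hX.eigenvalues i) 0) =
        hX.eigenvalues := by
      funext i
      rcases le_total (hX.eigenvalues i) 0 with h | h
      · rw [max_eq_right h, max_eq_left (by linarith)]; ring
      · rw [max_eq_left h, max_eq_right (by linarith)]; ring
    rw [this]
  · rw [traceNorm_hermitian hX, conjD_trace, conjD_trace]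
    rw [Complex.re_sum, Complex.re_sum, ← Finset.sum_add_distrib]
    apply Finset.sum_congr rfl
    intro i _
    simp [abs_eq_max_neg]

lemma traceNorm_congr {A B : Matrix n n ℂ} (h : Aᴴ * A = Bᴴ * B) : traceNorm A = traceNorm B := by
  have : (Matrix.posSemidef_conjTranspose_mul_self B).sqrt =
      (Matrix.posSemidef_conjTranspose_mul_self A).sqrt :=
    (Matrix.posSemidef_conjTranspose_mul_self B).posSemidef_sqrt.eq_sqrt_of_sq_eq _
      (by rw [(Matrix.posSemidef_conjTranspose_mul_self B).sq_sqrt, h])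
  rw [traceNorm, traceNorm, this]

lemma traceNorm_neg (A : Matrix n n ℂ) : traceNorm (-A) = traceNorm A :=
  traceNorm_congr (by simp)

lemma key_trace_le {X A : Matrix n n ℂ} (hX : X.IsHermitian) (hA : A.PosSemidef)
    (f : n → ℝ) (hf1 : ∀ i, f i ≤ 1) : ((conjD hX f * A).trace).re ≤ A.trace.re := by
  have h1 : conjD hX (fun _ => 1) - conjD hX f = conjD hX (fun i => 1 - f i) := conjD_sub hX _ _
  have hpsd : (conjD hX (fun i => 1 - f i)).PosSemidef :=
    conjD_posSemidef hX (fun i => by linarith [hf1 i])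
  have h2 : 0 ≤ (((conjD hX (fun i => 1 - f i)) * A).trace).re :=
    trace_mul_psd_re_nonneg hpsd hA
  rw [← h1, Matrix.sub_mul, Matrix.trace_sub, Complex.sub_re, conjD_one hX, Matrix.one_mul] at h2
  linarith

lemma traceNorm_sub_le {A B : Matrix n n ℂ} (hA : A.PosSemidef) (hB : B.PosSemidef) :
    traceNorm (A - B) ≤ A.trace.re + B.trace.re := by
  have hX : (A - B).IsHermitian := hA.1.sub hB.1
  set l := hX.eigenvalues with hl
  have habs : ∀ i, |l i| = max (l i) 0 + max (-l i) 0 := fun i => by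
    rw [abs_eq_max_neg]
    rcases le_total (l i) 0 with h | h
    · rw [max_eq_right (by linarith : l i ≤ -l i), max_eq_right h,
        max_eq_left (by linarith : (0:ℝ) ≤ -l i)]; ring
    · rw [max_eq_left (by linarith : -l i ≤ l i), max_eq_left h,
        max_eq_right (by linarith : -l i ≤ 0)]; ring
  have hpos : ∑ i, max (l i) 0 ≤ A.trace.re := by
    set f : n → ℝ := fun i => if 0 < l i then 1 else 0 with hf
    have hf0 : ∀ i, 0 ≤ f i := fun i => by rw [hf]; positivity
    have hf1 : ∀ i, f i ≤ 1 := fun i => by rw [hf]; dsimp; split <;> norm_num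
    have hmul : conjD hX f * (A - B) = conjD hX (fun i => max (l i) 0) := by
      have hm := conjD_mul hX f hX.eigenvalues
      rw [conjD_eigen hX] at hm
      have hfun : (fun i => f i * hX.eigenvalues i) = (fun i => max (l i) 0) := by
        funext i
        show (if 0 < l i then (1:ℝ) else 0) * l i = max (l i) 0
        rcases lt_trichotomy (l i) 0 with h | h | h
        · rw [if_neg (by linarith), max_eq_right (le_of_lt h)]; ring
        · rw [h]; simp
        · rw [if_pos h, max_eq_left (le_of_lt h)]; ring
      rw [hm, hfun]
    have htr : ((conjD hX f * (A - B)).trace).re = ∑ i, max (l i) 0 := by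
      rw [hmul, conjD_trace, Complex.re_sum]
      simp
    rw [Matrix.mul_sub, Matrix.trace_sub, Complex.sub_re] at htr
    have h1 : 0 ≤ ((conjD hX f * B).trace).re :=
      trace_mul_psd_re_nonneg (conjD_posSemidef hX hf0) hB
    have h2 : ((conjD hX f * A).trace).re ≤ A.trace.re := key_trace_le hX hA f hf1
    linarith
  have hneg : ∑ i, max (-l i) 0 ≤ B.trace.re := by
    set f : n → ℝ := fun i => if l i < 0 then 1 else 0 with hf
    have hf0 : ∀ i, 0 ≤ f i := fun i => by rw [hf]; positivity
    have hf1 : ∀ i, f i ≤ 1 := fun i => by rw [hf]; dsimp; split <;> norm_num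
    have hmul : conjD hX f * (A - B) = conjD hX (fun i => -(max (-l i) 0)) := by
      have hm := conjD_mul hX f hX.eigenvalues
      rw [conjD_eigen hX] at hm
      have hfun : (fun i => f i * hX.eigenvalues i) = (fun i => -(max (-l i) 0)) := by
        funext i
        show (if l i < 0 then (1:ℝ) else 0) * l i = -(max (-l i) 0)
        rcases lt_trichotomy (l i) 0 with h | h | h
        · rw [if_pos h, max_eq_left (by linarith)]; ring
        · rw [h]; simp
        · rw [if_neg (by linarith), max_eq_right (by linarith)]; ring
      rw [hm, hfun]
    have htr : ((conjD hX f * (A - B)).trace).re = -∑ i, max (-l i) 0 := by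
      rw [hmul, conjD_trace, Complex.re_sum]
      push_cast
      rw [← Finset.sum_neg_distrib]
      simp
    rw [Matrix.mul_sub, Matrix.trace_sub, Complex.sub_re] at htr
    have h1 : 0 ≤ ((conjD hX f * A).trace).re :=
      trace_mul_psd_re_nonneg (conjD_posSemidef hX hf0) hA
    have h2 : ((conjD hX f * B).trace).re ≤ B.trace.re := key_trace_le hX hB f hf1
    linarith
  calc traceNorm (A - B) = ∑ i, |l i| := traceNorm_hermitian hX
    _ = ∑ i, max (l i) 0 + ∑ i, max (-l i) 0 := by
        rw [← Finset.sum_add_distrib]; exact Finset.sum_congr rfl fun i _ => habs i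
    _ ≤ A.trace.re + B.trace.re := add_le_add hpos hneg

lemma traceNorm_add_le {X Y : Matrix n n ℂ} (hX : X.IsHermitian) (hY : Y.IsHermitian) :
    traceNorm (X + Y) ≤ traceNorm X + traceNorm Y := by
  obtain ⟨P1, N1, hP1, hN1, hd1, ht1⟩ := exists_posneg_parts hX
  obtain ⟨P2, N2, hP2, hN2, hd2, ht2⟩ := exists_posneg_parts hY
  have h : X + Y = (P1 + P2) - (N1 + N2) := by rw [hd1, hd2]; abel
  rw [h, ht1, ht2]
  calc traceNorm ((P1 + P2) - (N1 + N2)) ≤ (P1 + P2).trace.re + (N1 + N2).trace.re :=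
        traceNorm_sub_le (hP1.add hP2) (hN1.add hN2)
    _ = P1.trace.re + N1.trace.re + (P2.trace.re + N2.trace.re) := by
        rw [Matrix.trace_add, Matrix.trace_add, Complex.add_re, Complex.add_re]; ring

lemma cp_posSemidef {Φ : Matrix n n ℂ →ₗ[ℂ] Matrix n n ℂ} (hΦ : IsCompletelyPositive Φ)
    {A : Matrix n n ℂ} (hA : A.PosSemidef) : (Φ A).PosSemidef := by
  have h := hΦ 1 (Matrix.of fun p q => A p.1 q.1) (hA.submatrix Prod.fst)
  have h2 := h.submatrix (fun i : n => (i, (0 : Fin 1)))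
  have : Φ A = ((Matrix.of fun (p q : n × Fin 1) =>
      Φ (Matrix.of fun i j => (Matrix.of fun p q => A p.1 q.1) (i, p.2) (j, q.2)) p.1 q.1).submatrix
      (fun i : n => (i, (0 : Fin 1))) (fun i : n => (i, (0 : Fin 1)))) := by
    ext i j
    rfl
  rw [this]
  exact h2

lemma hermitian_map {Φ : Matrix n n ℂ →ₗ[ℂ] Matrix n n ℂ} (hΦ : IsCompletelyPositive Φ)
    {X : Matrix n n ℂ} (hX : X.IsHermitian) : (Φ X).IsHermitian := by
  obtain ⟨P, N, hP, hN, hd, -⟩ := exists_posneg_parts hX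
  rw [hd, map_sub]
  exact ((cp_posSemidef hΦ hP).1).sub ((cp_posSemidef hΦ hN).1)

lemma channel_traceNorm_le {Φ : Matrix n n ℂ →ₗ[ℂ] Matrix n n ℂ} (hΦ : IsQuantumChannel Φ)
    {X : Matrix n n ℂ} (hX : X.IsHermitian) : traceNorm (Φ X) ≤ traceNorm X := by
  obtain ⟨P, N, hP, hN, hd, ht⟩ := exists_posneg_parts hX
  rw [hd] at ht
  rw [hd, map_sub, ht]
  calc traceNorm (Φ P - Φ N) ≤ (Φ P).trace.re + (Φ N).trace.re :=
        traceNorm_sub_le (cp_posSemidef hΦ.1 hP) (cp_posSemidef hΦ.1 hN)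
    _ = P.trace.re + N.trace.re := by rw [hΦ.2 P, hΦ.2 N]

lemma channel_density {Φ : Matrix n n ℂ →ₗ[ℂ] Matrix n n ℂ} (hΦ : IsQuantumChannel Φ)
    {ρ : Matrix n n ℂ} (hρ : IsDensityMatrix ρ) : IsDensityMatrix (Φ ρ) :=
  ⟨cp_posSemidef hΦ.1 hρ.1, by rw [hΦ.2 ρ, hρ.2]⟩

end TraceNormAux
end AuxLemmas

namespace TraceNormAux
open Matrix
open scoped ComplexOrder
variable {n : Type*} [Fintype n] [DecidableEq n]

lemma traceNorm_zero : traceNorm (0 : Matrix n n ℂ) = 0 := by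
  rw [traceNorm_of_posSemidef Matrix.PosSemidef.zero, Matrix.trace_zero]
  simp

lemma traceNorm_sum_le {ι : Type*} (s : Finset ι) (f : ι → Matrix n n ℂ)
    (h : ∀ i, (f i).IsHermitian) :
    traceNorm (∑ i ∈ s, f i) ≤ ∑ i ∈ s, traceNorm (f i) := by
  induction s using Finset.cons_induction with
  | empty => simp [traceNorm_zero]
  | cons a s ha ih =>
    rw [Finset.sum_cons, Finset.sum_cons]
    have hs : (∑ i ∈ s, f i).IsHermitian := by
      show (∑ i ∈ s, f i)ᴴ = ∑ i ∈ s, f i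
      rw [Matrix.conjTranspose_sum]
      exact Finset.sum_congr rfl fun i _ => (h i).eq
    exact (traceNorm_add_le (h a) hs).trans (by linarith)

end TraceNormAux

theorem fixed_point_distance_bound_channel_norm {n : Type*} [Fintype n] [DecidableEq n]
    (K1 K2 : Matrix n n ℂ →ₗ[ℂ] Matrix n n ℂ)
    (hK1 : IsQuantumChannel K1) (hK2 : IsQuantumChannel K2)
    (ρ1 ρ2 : Matrix n n ℂ) (hρ1 : IsDensityMatrix ρ1) (hρ2 : IsDensityMatrix ρ2)
    (hfix1 : K1 ρ1 = ρ1) (hfix2 : K2 ρ2 = ρ2)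
    (τ : ℕ) (hτ : 0 < τ) (ε : ℝ)
    (hmix : ∀ ρ : Matrix n n ℂ, IsDensityMatrix ρ → traceNorm ((⇑K1)^[τ] ρ - ρ1) ≤ ε) :
    traceNorm (ρ1 - ρ2) ≤ ε + τ * norm11 (fun ρ => K1 ρ - K2 ρ) := by
  classical
  have hden : ∀ j, IsDensityMatrix ((⇑K1)^[j] ρ2) := by
    intro j
    induction j with
    | zero => simpa using hρ2
    | succ j ih =>
      rw [Function.iterate_succ_apply']
      exact TraceNormAux.channel_density hK1 ih
  set Y := K1 ρ2 - K2 ρ2 with hYdef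
  have hYh : Y.IsHermitian :=
    ((TraceNormAux.cp_posSemidef hK1.1 hρ2.1).1).sub ((TraceNormAux.cp_posSemidef hK2.1 hρ2.1).1)
  have hith : ∀ j, ((⇑K1)^[j] Y).IsHermitian := by
    intro j
    induction j with
    | zero => simpa using hYh
    | succ j ih =>
      rw [Function.iterate_succ_apply']
      exact TraceNormAux.hermitian_map hK1.1 ih
  have hitn : ∀ j, traceNorm ((⇑K1)^[j] Y) ≤ traceNorm Y := by
    intro j
    induction j with
    | zero => simp
    | succ j ih =>
      rw [Function.iterate_succ_apply']
      exact le_trans (TraceNormAux.channel_traceNorm_le hK1 (hith j)) ih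
  have htel : (⇑K1)^[τ] ρ2 - ρ2 = ∑ j ∈ Finset.range τ, (⇑K1)^[j] Y := by
    have hrw : ∀ j : ℕ, (⇑K1)^[j] Y = (⇑K1)^[j + 1] ρ2 - (⇑K1)^[j] ρ2 := by
      intro j
      have h1 : (⇑K1)^[j] Y = (K1 ^ j) Y := (Module.End.pow_apply K1 j Y).symm
      rw [h1, hYdef, hfix2, map_sub, Module.End.pow_apply, Module.End.pow_apply,
        Function.iterate_succ_apply]
    rw [Finset.sum_congr rfl fun j _ => hrw j, Finset.sum_range_sub (fun j => (⇑K1)^[j] ρ2) τ,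
      Function.iterate_zero_apply]
  have hBdd : BddAbove (Set.range fun ρ : {ρ : Matrix n n ℂ // IsDensityMatrix ρ} =>
      traceNorm ((fun ρ => K1 ρ - K2 ρ) (↑ρ))) := by
    refine ⟨2, ?_⟩
    rintro x ⟨ρ, rfl⟩
    calc traceNorm (K1 ρ - K2 ρ) ≤ (K1 (ρ : Matrix n n ℂ)).trace.re + (K2 (ρ : Matrix n n ℂ)).trace.re :=
          TraceNormAux.traceNorm_sub_le (TraceNormAux.cp_posSemidef hK1.1 ρ.2.1)
            (TraceNormAux.cp_posSemidef hK2.1 ρ.2.1)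
      _ = 2 := by rw [hK1.2 _, hK2.2 _, ρ.2.2]; norm_num
  have hYn : traceNorm Y ≤ norm11 (fun ρ => K1 ρ - K2 ρ) := by
    have := le_ciSup hBdd (⟨ρ2, hρ2⟩ : {ρ : Matrix n n ℂ // IsDensityMatrix ρ})
    simpa [norm11] using this
  have h1 : traceNorm (ρ1 - (⇑K1)^[τ] ρ2) ≤ ε := by
    rw [show ρ1 - (⇑K1)^[τ] ρ2 = -((⇑K1)^[τ] ρ2 - ρ1) from (neg_sub _ _).symm,
      TraceNormAux.traceNorm_neg]
    exact hmix ρ2 hρ2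
  have h2 : traceNorm ((⇑K1)^[τ] ρ2 - ρ2) ≤ τ * norm11 (fun ρ => K1 ρ - K2 ρ) := by
    rw [htel]
    calc traceNorm (∑ j ∈ Finset.range τ, (⇑K1)^[j] Y)
        ≤ ∑ j ∈ Finset.range τ, traceNorm ((⇑K1)^[j] Y) :=
          TraceNormAux.traceNorm_sum_le _ _ hith
      _ ≤ ∑ _j ∈ Finset.range τ, norm11 (fun ρ => K1 ρ - K2 ρ) :=
          Finset.sum_le_sum fun j _ => (hitn j).trans hYn
      _ = τ * norm11 (fun ρ => K1 ρ - K2 ρ) := by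
          rw [Finset.sum_const, Finset.card_range, nsmul_eq_mul]
  calc traceNorm (ρ1 - ρ2)
      = traceNorm ((ρ1 - (⇑K1)^[τ] ρ2) + ((⇑K1)^[τ] ρ2 - ρ2)) := by rw [sub_add_sub_cancel]
    _ ≤ traceNorm (ρ1 - (⇑K1)^[τ] ρ2) + traceNorm ((⇑K1)^[τ] ρ2 - ρ2) :=
        TraceNormAux.traceNorm_add_le (hρ1.1.1.sub (hden τ).1.1) ((hden τ).1.1.sub hρ2.1.1)
    _ ≤ ε + τ * norm11 (fun ρ => K1 ρ - K2 ρ) := add_le_add h1 h2
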